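/- Fix a real number $d > 0$ and integers $m_1, m_2, m_3 \geq 2$ with $\frac{1}{m_1-1} + \frac{1}{m_2-1} + \frac{1}{m_3-1} \geq 1$. For $m \geq 2$ define $g_m(q) = \frac{m-1}{2m}(d+q)^2$ if $(m-1)q \leq d$ and $g_m(q) = d^2 - \frac{m-1}{2(m-2)}(d-q)^2$ if $(m-1)q > d$. Then for all nonnegative reals $p, p_1, p_2, p_3$ with $p + p_1 + p_2 + p_3 = d$, one has $g_{m_1}(p_1) + g_{m_2}(p_2) + g_{m_3}(p_3) \leq 2d^2$. -/

import Mathlib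

open Classical in
noncomputable def g (d : ℝ) (m : ℕ) (q : ℝ) : ℝ :=
  if ((m : ℝ) - 1) * q ≤ d then ((m : ℝ) - 1) / (2 * m) * (d + q) ^ 2
  else d ^ 2 - ((m : ℝ) - 1) / (2 * ((m : ℝ) - 2)) * (d - q) ^ 2

private lemma cauchy2 (x y a b : ℝ) (ha : 0 < a) (hb : 0 < b) :
    (x + y) ^ 2 ≤ (a + b) * (x ^ 2 / a + y ^ 2 / b) := by
  rw [← sub_nonneg]
  have e : (a + b) * (x ^ 2 / a + y ^ 2 / b) - (x + y) ^ 2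
      = (b * x - a * y) ^ 2 / (a * b) := by
    field_simp
    ring
  rw [e]; positivity

private lemma cauchy3 (x y z a b c : ℝ) (ha : 0 < a) (hb : 0 < b) (hc : 0 < c) :
    (x + y + z) ^ 2 ≤ (a + b + c) * (x ^ 2 / a + y ^ 2 / b + z ^ 2 / c) := by
  rw [← sub_nonneg]
  have e : (a + b + c) * (x ^ 2 / a + y ^ 2 / b + z ^ 2 / c) - (x + y + z) ^ 2
      = (c * (b * x - a * y) ^ 2 + b * (c * x - a * z) ^ 2 + a * (c * y - b * z) ^ 2)
        / (a * b * c) := by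
    field_simp
    ring
  rw [e]; positivity

private lemma caseA (d a b c pa pb pc : ℝ) (hd : 0 < d)
    (ha : 0 < a) (hb : 0 < b) (hc : 0 < c)
    (hpa : 0 ≤ pa) (hpa' : pa ≤ a * d) (hpb : 0 ≤ pb) (hpb' : pb ≤ b * d)
    (hpc : 0 ≤ pc) (hpc' : pc ≤ c * d) (hs : pa + pb + pc ≤ d) :
    (d + pa) ^ 2 / (2 * (1 + a)) + (d + pb) ^ 2 / (2 * (1 + b))
      + (d + pc) ^ 2 / (2 * (1 + c)) ≤ 2 * d ^ 2 := by
  have ta : (d + pa) ^ 2 / (2 * (1 + a)) ≤ d * (d + pa) / 2 := by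
    rw [div_le_div_iff₀ (by linarith) (by norm_num)]
    nlinarith [mul_nonneg (by linarith : (0:ℝ) ≤ d + pa) (by linarith : (0:ℝ) ≤ a * d - pa)]
  have tb : (d + pb) ^ 2 / (2 * (1 + b)) ≤ d * (d + pb) / 2 := by
    rw [div_le_div_iff₀ (by linarith) (by norm_num)]
    nlinarith [mul_nonneg (by linarith : (0:ℝ) ≤ d + pb) (by linarith : (0:ℝ) ≤ b * d - pb)]
  have tc : (d + pc) ^ 2 / (2 * (1 + c)) ≤ d * (d + pc) / 2 := by
    rw [div_le_div_iff₀ (by linarith) (by norm_num)]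
    nlinarith [mul_nonneg (by linarith : (0:ℝ) ≤ d + pc) (by linarith : (0:ℝ) ≤ c * d - pc)]
  have hsum : d * (pa + pb + pc) ≤ d * d := mul_le_mul_of_nonneg_left hs hd.le
  nlinarith [ta, tb, tc, hsum]

private lemma caseB (d a b c pa pb pc : ℝ) (hd : 0 < d)
    (ha : 0 < a) (ha1 : a ≤ 1) (hb : 0 < b) (hb1 : b ≤ 1)
    (hc : 0 < c) (hc2 : c ≤ 1/2) (habc : 1 ≤ a + b + c)
    (hpa : 0 ≤ pa) (hpa' : pa ≤ a * d) (hpb : 0 ≤ pb) (hpb' : pb ≤ b * d)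
    (hpc : 0 ≤ pc) (hs : pa + pb + pc ≤ d) :
    (d + pa) ^ 2 / (2 * (1 + a)) + (d + pb) ^ 2 / (2 * (1 + b))
      + (d ^ 2 - (d - pc) ^ 2 / (2 * (1 - c))) ≤ 2 * d ^ 2 := by
  have hα : (0:ℝ) < 1 + a := by linarith
  have hβ : (0:ℝ) < 1 + b := by linarith
  have hγ : (0:ℝ) < 1 - c := by linarith
  -- the key polynomial inequality
  have hN : 0 ≤ 2 * d ^ 2 * (1 + a) * (1 + b) * (1 - c)
      + (pa + pb) ^ 2 * (1 + a) * (1 + b)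
      - (d + pa) ^ 2 * (1 + b) * (1 - c) - (d + pb) ^ 2 * (1 + a) * (1 - c) := by
    have idp : 2 * d ^ 2 * (1 + a) * (1 + b) * (1 - c)
        + (pa + pb) ^ 2 * (1 + a) * (1 + b)
        - (d + pa) ^ 2 * (1 + b) * (1 - c) - (d + pb) ^ 2 * (1 + a) * (1 - c)
        = (1 - c) * (2 * d ^ 2 * (1 + a) * (1 + b) - (d + pa) ^ 2 * (1 + b)
          - (d + pb) ^ 2 * (1 + a)) + (pa + pb) ^ 2 * ((1 + a) * (1 + b)) := by ring
    have t2 : 0 ≤ (pa + pb) ^ 2 * ((1 + a) * (1 + b)) :=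
      mul_nonneg (sq_nonneg _) (mul_pos hα hβ).le
    rcases le_or_gt 0 (2 * d ^ 2 * (1 + a) * (1 + b) - (d + pa) ^ 2 * (1 + b)
        - (d + pb) ^ 2 * (1 + a)) with hD | hD
    · have t1 : 0 ≤ (1 - c) * (2 * d ^ 2 * (1 + a) * (1 + b) - (d + pa) ^ 2 * (1 + b)
          - (d + pb) ^ 2 * (1 + a)) := mul_nonneg hγ.le hD
      linarith
    · have hab : 1 - c ≤ a + b := by linarith
      have hmul : (a + b) * (2 * d ^ 2 * (1 + a) * (1 + b) - (d + pa) ^ 2 * (1 + b)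
          - (d + pb) ^ 2 * (1 + a)) ≤ (1 - c) * (2 * d ^ 2 * (1 + a) * (1 + b)
          - (d + pa) ^ 2 * (1 + b) - (d + pb) ^ 2 * (1 + a)) :=
        mul_le_mul_of_nonpos_right hab hD.le
      have hF : 0 ≤ (1 - b ^ 2) * (a * d - pa) ^ 2
          + 2 * (1 + a) * (1 + b) * ((a * d - pa) * (b * d - pb))
          + (1 - a ^ 2) * (b * d - pb) ^ 2 := by
        have e1 : 0 ≤ (1 - b ^ 2) * (a * d - pa) ^ 2 :=
          mul_nonneg (by nlinarith) (sq_nonneg _)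
        have e2 : 0 ≤ 2 * (1 + a) * (1 + b) * ((a * d - pa) * (b * d - pb)) := by
          have := mul_nonneg (by linarith : (0:ℝ) ≤ a * d - pa)
            (by linarith : (0:ℝ) ≤ b * d - pb)
          positivity
        have e3 : 0 ≤ (1 - a ^ 2) * (b * d - pb) ^ 2 :=
          mul_nonneg (by nlinarith) (sq_nonneg _)
        linarith
      have key : (a + b) * (2 * d ^ 2 * (1 + a) * (1 + b) - (d + pa) ^ 2 * (1 + b)
          - (d + pb) ^ 2 * (1 + a)) + (pa + pb) ^ 2 * (1 + a) * (1 + b)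
          = (1 - b ^ 2) * (a * d - pa) ^ 2
            + 2 * (1 + a) * (1 + b) * ((a * d - pa) * (b * d - pb))
            + (1 - a ^ 2) * (b * d - pb) ^ 2 := by ring
      have key2 : (a + b) * (2 * d ^ 2 * (1 + a) * (1 + b) - (d + pa) ^ 2 * (1 + b)
          - (d + pb) ^ 2 * (1 + a)) + (pa + pb) ^ 2 * ((1 + a) * (1 + b)) ≥ 0 := by
        rw [show (pa + pb) ^ 2 * ((1 + a) * (1 + b)) = (pa + pb) ^ 2 * (1 + a) * (1 + b)
          from by ring]
        linarith [key, hF]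
      linarith
  have hkey : (d + pa) ^ 2 / (1 + a) + (d + pb) ^ 2 / (1 + b)
      - (pa + pb) ^ 2 / (1 - c) ≤ 2 * d ^ 2 := by
    rw [← sub_nonneg]
    have e : 2 * d ^ 2 - ((d + pa) ^ 2 / (1 + a) + (d + pb) ^ 2 / (1 + b)
        - (pa + pb) ^ 2 / (1 - c))
        = (2 * d ^ 2 * (1 + a) * (1 + b) * (1 - c)
          + (pa + pb) ^ 2 * (1 + a) * (1 + b)
          - (d + pa) ^ 2 * (1 + b) * (1 - c) - (d + pb) ^ 2 * (1 + a) * (1 - c))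
          / ((1 + a) * (1 + b) * (1 - c)) := by
      field_simp
      ring
    rw [e]
    exact div_nonneg hN (by positivity)
  have hw : (pa + pb) ^ 2 ≤ (d - pc) ^ 2 := by nlinarith
  have hw' : (pa + pb) ^ 2 / (1 - c) ≤ (d - pc) ^ 2 / (1 - c) := by gcongr
  have r1 : (d + pa) ^ 2 / (2 * (1 + a)) = (d + pa) ^ 2 / (1 + a) / 2 := by rw [div_div, mul_comm]
  have r2 : (d + pb) ^ 2 / (2 * (1 + b)) = (d + pb) ^ 2 / (1 + b) / 2 := by rw [div_div, mul_comm]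
  have r3 : (d - pc) ^ 2 / (2 * (1 - c)) = (d - pc) ^ 2 / (1 - c) / 2 := by rw [div_div, mul_comm]
  linarith

private lemma caseC (d a b c pa pb pc : ℝ) (hd : 0 < d)
    (ha : 0 < a) (hb : 0 < b) (hb2 : b ≤ 1/2) (hc : 0 < c) (hc2 : c ≤ 1/2)
    (habc : 1 ≤ a + b + c)
    (hpa : 0 ≤ pa) (hpb : 0 ≤ pb) (hpc : 0 ≤ pc) (hs : pa + pb + pc ≤ d) :
    (d + pa) ^ 2 / (2 * (1 + a)) + (d ^ 2 - (d - pb) ^ 2 / (2 * (1 - b)))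
      + (d ^ 2 - (d - pc) ^ 2 / (2 * (1 - c))) ≤ 2 * d ^ 2 := by
  have hα : (0:ℝ) < 1 + a := by linarith
  have hβ : (0:ℝ) < 1 - b := by linarith
  have hγ : (0:ℝ) < 1 - c := by linarith
  have h0 : (0:ℝ) ≤ d + pa := by linarith
  have h1 : (d + pa) ^ 2 ≤ ((d - pb) + (d - pc)) ^ 2 := by nlinarith
  have h2 := cauchy2 (d - pb) (d - pc) (1 - b) (1 - c) hβ hγ
  have hR : 0 ≤ (d - pb) ^ 2 / (1 - b) + (d - pc) ^ 2 / (1 - c) := by positivity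
  have h3 : ((1 - b) + (1 - c)) * ((d - pb) ^ 2 / (1 - b) + (d - pc) ^ 2 / (1 - c))
      ≤ (1 + a) * ((d - pb) ^ 2 / (1 - b) + (d - pc) ^ 2 / (1 - c)) :=
    mul_le_mul_of_nonneg_right (by linarith) hR
  have h4 : (d + pa) ^ 2 ≤ (1 + a) * ((d - pb) ^ 2 / (1 - b) + (d - pc) ^ 2 / (1 - c)) := by
    linarith
  have h5 : (d + pa) ^ 2 / (2 * (1 + a))
      ≤ (1 + a) * ((d - pb) ^ 2 / (1 - b) + (d - pc) ^ 2 / (1 - c)) / (2 * (1 + a)) := by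
    gcongr
  have h6 : (1 + a) * ((d - pb) ^ 2 / (1 - b) + (d - pc) ^ 2 / (1 - c)) / (2 * (1 + a))
      = (d - pb) ^ 2 / (2 * (1 - b)) + (d - pc) ^ 2 / (2 * (1 - c)) := by
    field_simp
  linarith

private lemma caseD (d a b c pa pb pc : ℝ) (hd : 0 < d)
    (ha : 0 < a) (ha2 : a ≤ 1/2) (hb : 0 < b) (hb2 : b ≤ 1/2)
    (hc : 0 < c) (hc2 : c ≤ 1/2) (habc : 1 ≤ a + b + c)
    (hpa : 0 ≤ pa) (hpb : 0 ≤ pb) (hpc : 0 ≤ pc) (hs : pa + pb + pc ≤ d) :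
    (d ^ 2 - (d - pa) ^ 2 / (2 * (1 - a))) + (d ^ 2 - (d - pb) ^ 2 / (2 * (1 - b)))
      + (d ^ 2 - (d - pc) ^ 2 / (2 * (1 - c))) ≤ 2 * d ^ 2 := by
  have hα : (0:ℝ) < 1 - a := by linarith
  have hβ : (0:ℝ) < 1 - b := by linarith
  have hγ : (0:ℝ) < 1 - c := by linarith
  have h1 : (2 * d) ^ 2 ≤ ((d - pa) + (d - pb) + (d - pc)) ^ 2 := by nlinarith
  have h2 := cauchy3 (d - pa) (d - pb) (d - pc) (1 - a) (1 - b) (1 - c) hα hβ hγ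
  have hR : 0 ≤ (d - pa) ^ 2 / (1 - a) + (d - pb) ^ 2 / (1 - b) + (d - pc) ^ 2 / (1 - c) := by
    positivity
  have h3 : ((1 - a) + (1 - b) + (1 - c))
        * ((d - pa) ^ 2 / (1 - a) + (d - pb) ^ 2 / (1 - b) + (d - pc) ^ 2 / (1 - c))
      ≤ 2 * ((d - pa) ^ 2 / (1 - a) + (d - pb) ^ 2 / (1 - b) + (d - pc) ^ 2 / (1 - c)) :=
    mul_le_mul_of_nonneg_right (by linarith) hR
  have h4 : 2 * d ^ 2 ≤ (d - pa) ^ 2 / (1 - a) + (d - pb) ^ 2 / (1 - b)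
      + (d - pc) ^ 2 / (1 - c) := by nlinarith
  have r1 : (d - pa) ^ 2 / (2 * (1 - a)) = (d - pa) ^ 2 / (1 - a) / 2 := by rw [div_div, mul_comm]
  have r2 : (d - pb) ^ 2 / (2 * (1 - b)) = (d - pb) ^ 2 / (1 - b) / 2 := by rw [div_div, mul_comm]
  have r3 : (d - pc) ^ 2 / (2 * (1 - c)) = (d - pc) ^ 2 / (1 - c) / 2 := by rw [div_div, mul_comm]
  linarith

private lemma g_rep (d : ℝ) (hd : 0 < d) (m : ℕ) (hm : 2 ≤ m) (q : ℝ)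
    (h0 : 0 ≤ q) (hqd : q ≤ d) :
    (g d m q = (d + q) ^ 2 / (2 * (1 + 1 / ((m : ℝ) - 1))) ∧ q ≤ (1 / ((m : ℝ) - 1)) * d)
    ∨ (g d m q = d ^ 2 - (d - q) ^ 2 / (2 * (1 - 1 / ((m : ℝ) - 1)))
        ∧ 1 / ((m : ℝ) - 1) ≤ 1/2) := by
  have hm' : (2:ℝ) ≤ (m : ℝ) := by exact_mod_cast hm
  have h1 : (0:ℝ) < (m : ℝ) - 1 := by linarith
  unfold g
  split_ifs with h
  · left
    constructor
    · have hm0 : ((m : ℝ)) ≠ 0 := by linarith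
      field_simp
      ring
    · rw [show (1 / ((m : ℝ) - 1)) * d = d / ((m : ℝ) - 1) by ring, le_div_iff₀ h1]
      linarith [h]
  · right
    have h3 : 3 ≤ m := by
      rcases Nat.lt_or_ge m 3 with hlt | hge
      · exfalso
        have hm2 : m = 2 := by omega
        subst hm2
        apply h
        push_cast
        linarith
      · exact hge
    have hm3 : (3:ℝ) ≤ (m : ℝ) := by exact_mod_cast h3
    have h2 : (0:ℝ) < (m : ℝ) - 2 := by linarith
    have hhalf : 1 / ((m : ℝ) - 1) ≤ 1/2 := by
      rw [div_le_div_iff₀ h1 (by norm_num : (0:ℝ) < 2)]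
      linarith
    constructor
    · have hX : (0:ℝ) < 2 * (1 - 1 / ((m : ℝ) - 1)) := by linarith
      have hco : ((m : ℝ) - 1) / (2 * ((m : ℝ) - 2)) = 1 / (2 * (1 - 1 / ((m : ℝ) - 1))) := by
        rw [div_eq_div_iff (by positivity) hX.ne']
        field_simp
        ring
      rw [hco]; ring
    · exact hhalf

theorem stmt7 (d : ℝ) (hd : 0 < d) (m₁ m₂ m₃ : ℕ)
    (h₁ : 2 ≤ m₁) (h₂ : 2 ≤ m₂) (h₃ : 2 ≤ m₃)
    (hsum : 1 / ((m₁ : ℝ) - 1) + 1 / ((m₂ : ℝ) - 1) + 1 / ((m₃ : ℝ) - 1) ≥ 1)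
    (p p₁ p₂ p₃ : ℝ) (hp : 0 ≤ p) (hp₁ : 0 ≤ p₁) (hp₂ : 0 ≤ p₂) (hp₃ : 0 ≤ p₃)
    (hps : p + p₁ + p₂ + p₃ = d) :
    g d m₁ p₁ + g d m₂ p₂ + g d m₃ p₃ ≤ 2 * d ^ 2 := by
  have hM₁ : (2:ℝ) ≤ (m₁ : ℝ) := by exact_mod_cast h₁
  have hM₂ : (2:ℝ) ≤ (m₂ : ℝ) := by exact_mod_cast h₂
  have hM₃ : (2:ℝ) ≤ (m₃ : ℝ) := by exact_mod_cast h₃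
  have hc₁ : 0 < 1 / ((m₁ : ℝ) - 1) := one_div_pos.mpr (by linarith)
  have hc₂ : 0 < 1 / ((m₂ : ℝ) - 1) := one_div_pos.mpr (by linarith)
  have hc₃ : 0 < 1 / ((m₃ : ℝ) - 1) := one_div_pos.mpr (by linarith)
  have hc₁' : 1 / ((m₁ : ℝ) - 1) ≤ 1 := by
    rw [div_le_one (by linarith)]; linarith
  have hc₂' : 1 / ((m₂ : ℝ) - 1) ≤ 1 := by
    rw [div_le_one (by linarith)]; linarith
  have hc₃' : 1 / ((m₃ : ℝ) - 1) ≤ 1 := by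
    rw [div_le_one (by linarith)]; linarith
  have hsum3 : p₁ + p₂ + p₃ ≤ d := by linarith
  have hq₁ : p₁ ≤ d := by linarith
  have hq₂ : p₂ ≤ d := by linarith
  have hq₃ : p₃ ≤ d := by linarith
  rcases g_rep d hd m₁ h₁ p₁ hp₁ hq₁ with ⟨e₁, f₁⟩ | ⟨e₁, f₁⟩ <;>
    rcases g_rep d hd m₂ h₂ p₂ hp₂ hq₂ with ⟨e₂, f₂⟩ | ⟨e₂, f₂⟩ <;>
      rcases g_rep d hd m₃ h₃ p₃ hp₃ hq₃ with ⟨e₃, f₃⟩ | ⟨e₃, f₃⟩ <;>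
        rw [e₁, e₂, e₃]
  · exact caseA d _ _ _ p₁ p₂ p₃ hd hc₁ hc₂ hc₃ hp₁ f₁ hp₂ f₂ hp₃ f₃ hsum3
  · -- p₁, p₂ branch1; p₃ branch2
    exact caseB d _ _ _ p₁ p₂ p₃ hd hc₁ hc₁' hc₂ hc₂' hc₃ f₃ (by linarith)
      hp₁ f₁ hp₂ f₂ hp₃ hsum3
  · -- p₁, p₃ branch1; p₂ branch2
    linarith [caseB d _ _ _ p₁ p₃ p₂ hd hc₁ hc₁' hc₃ hc₃' hc₂ f₂ (by linarith)
      hp₁ f₁ hp₃ f₃ hp₂ (by linarith)]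
  · -- p₁ branch1; p₂, p₃ branch2
    exact caseC d _ _ _ p₁ p₂ p₃ hd hc₁ hc₂ f₂ hc₃ f₃ (by linarith)
      hp₁ hp₂ hp₃ hsum3
  · -- p₂, p₃ branch1; p₁ branch2
    linarith [caseB d _ _ _ p₂ p₃ p₁ hd hc₂ hc₂' hc₃ hc₃' hc₁ f₁ (by linarith)
      hp₂ f₂ hp₃ f₃ hp₁ (by linarith)]
  · -- p₂ branch1; p₁, p₃ branch2
    linarith [caseC d _ _ _ p₂ p₁ p₃ hd hc₂ hc₁ f₁ hc₃ f₃ (by linarith)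
      hp₂ hp₁ hp₃ (by linarith)]
  · -- p₃ branch1; p₁, p₂ branch2
    linarith [caseC d _ _ _ p₃ p₁ p₂ hd hc₃ hc₁ f₁ hc₂ f₂ (by linarith)
      hp₃ hp₁ hp₂ (by linarith)]
  · exact caseD d _ _ _ p₁ p₂ p₃ hd hc₁ f₁ hc₂ f₂ hc₃ f₃ (by linarith)
      hp₁ hp₂ hp₃ hsum3
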